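/- For every even integer k ≥ 4 and every ε > 0 there exists a simple closed polygon with exactly k vertices in EuclideanSpace ℝ (Fin 3) whose total curvature Σ_{i=0}^{k−1} angle(v_{i+1} − v_i, v_{i+2} − v_{i+1}) (indices mod k) is strictly greater than kπ − ε. In other words, for even k the bound kπ for the total curvature of a piecewise geodesic Jordan curve with k vertices is sharp. -/

import Mathlib

set_option maxHeartbeats 1000000
open Real InnerProductGeometry RealInnerProductSpace

/-- A closed polygon with vertices `v i` (indices cyclic, consecutive vertices distinct)
is simple (a piecewise geodesic Jordan curve) if any two consecutive edges meet exactly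
in their common vertex and any two non-consecutive edges are disjoint. -/
def IsSimpleClosedPolygon {k n : ℕ} (v : ZMod k → EuclideanSpace ℝ (Fin n)) : Prop :=
  (∀ i, v (i + 1) ≠ v i) ∧
  (∀ i, segment ℝ (v i) (v (i + 1)) ∩ segment ℝ (v (i + 1)) (v (i + 2)) = {v (i + 1)}) ∧
  (∀ i j, i ≠ j → i + 1 ≠ j → i ≠ j + 1 →
    Disjoint (segment ℝ (v i) (v (i + 1))) (segment ℝ (v j) (v (j + 1))))


noncomputable def wp (k : ℕ) (δ : ℝ) (n : ℤ) : EuclideanSpace ℝ (Fin 3) :=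
  (WithLp.equiv 2 (Fin 3 → ℝ)).symm
    ![δ * Real.cos (2*π*n/k), δ * Real.sin (2*π*n/k), if Even n then 0 else 1]

lemma wp0 (k : ℕ) (δ : ℝ) (n : ℤ) : wp k δ n 0 = δ * Real.cos (2*π*n/k) := by simp [wp]
lemma wp1 (k : ℕ) (δ : ℝ) (n : ℤ) : wp k δ n 1 = δ * Real.sin (2*π*n/k) := by simp [wp]
lemma wp2 (k : ℕ) (δ : ℝ) (n : ℤ) : wp k δ n 2 = if Even n then 0 else 1 := by simp [wp]

lemma inner3 (x y : EuclideanSpace ℝ (Fin 3)) : ⟪x, y⟫ = x 0 * y 0 + x 1 * y 1 + x 2 * y 2 := by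
  simp [PiLp.inner_apply, Fin.sum_univ_three, RCLike.inner_apply, mul_comm]

lemma normsq3 (x : EuclideanSpace ℝ (Fin 3)) : ‖x‖^2 = x 0 ^2 + x 1 ^2 + x 2^2 := by
  rw [← real_inner_self_eq_norm_sq, inner3]; ring

lemma wp_add_mul (k : ℕ) (hk : k ≠ 0) (hkeven : Even k) (δ : ℝ) (n q : ℤ) :
    wp k δ (n + q * k) = wp k δ n := by
  have hk0 : (k:ℝ) ≠ 0 := Nat.cast_ne_zero.2 hk
  have h0 : 2*π*((n + q*(k:ℤ) : ℤ):ℝ)/k = 2*π*n/k + q*(2*π) := by push_cast; field_simp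
  have hz : Even (n + q*(k:ℤ)) ↔ Even n := by
    have : Even (q*(k:ℤ)) := (Int.even_coe_nat k |>.2 hkeven).mul_left q
    simp [Int.even_add, this]
  unfold wp
  rw [h0, Real.cos_add_int_mul_two_pi, Real.sin_add_int_mul_two_pi]
  simp [hz]

lemma wp_congr (k : ℕ) (hk : k ≠ 0) (hkeven : Even k) (δ : ℝ) {m n : ℤ}
    (h : m ≡ n [ZMOD k]) : wp k δ m = wp k δ n := by
  obtain ⟨q, hq⟩ := Int.ModEq.dvd h
  have : n = m + q * k := by linarith
  rw [this, wp_add_mul k hk hkeven]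

lemma wp_ne (k : ℕ) (δ : ℝ) (n : ℤ) : wp k δ (n+1) ≠ wp k δ n := by
  intro h
  have h2 : wp k δ (n+1) 2 = wp k δ n 2 := by rw [h]
  rw [wp2, wp2] at h2
  rcases Int.even_or_odd n with he | ho
  · simp [he, Int.even_add_one] at h2
  · simp [Int.not_even_iff_odd.2 ho, ho, Int.even_add_one] at h2

lemma cos_lt (k : ℕ) (hk : 4 ≤ k) (b : ℤ) (hb : 2 ≤ b) (hbk : b < (k:ℤ)) :
    Real.cos ((2*(b:ℝ)-1)*π/k) < Real.cos (π/k) := by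
  have hπ := Real.pi_pos
  have hk0 : (0:ℝ) < k := by positivity
  have hbR : (2:ℝ) ≤ (b:ℝ) := by exact_mod_cast hb
  have hbkR : (b:ℝ) < (k:ℝ) := by exact_mod_cast hbk
  set t := (2*(b:ℝ)-1)*π/k with ht
  have hpk : 0 < π/(k:ℝ) := by positivity
  have hkne : (k:ℝ) ≠ 0 := ne_of_gt hk0
  have h1 : π/k < t := by
    have h := mul_lt_mul_of_pos_right (show (1:ℝ) < 2*(b:ℝ)-1 by linarith) hpk
    rw [ht]
    have e : (2*(b:ℝ)-1)*(π/k) = (2*(b:ℝ)-1)*π/k := by ring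
    linarith [e ▸ h]
  have h2 : t < 2*π - π/k := by
    have h := mul_lt_mul_of_pos_right (show (2*(b:ℝ)-1) < 2*(k:ℝ)-1 by linarith) hpk
    have e : (2*(k:ℝ)-1)*(π/k) = 2*π - π/k := by field_simp
    have e2 : (2*(b:ℝ)-1)*(π/k) = (2*(b:ℝ)-1)*π/k := by ring
    rw [ht]
    linarith [e ▸ e2 ▸ h]
  rcases le_or_gt t π with h3 | h3
  · exact Real.cos_lt_cos_of_nonneg_of_le_pi (by positivity) h3 h1
  · rw [← Real.cos_two_pi_sub t]
    have hkπ : π/k ≤ π := by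
      rw [div_le_iff₀ hk0]; nlinarith
    exact Real.cos_lt_cos_of_nonneg_of_le_pi (by positivity) (by linarith) (by linarith)

noncomputable def Lf (k : ℕ) (n : ℤ) (x : EuclideanSpace ℝ (Fin 3)) : ℝ :=
  Real.cos ((2*(n:ℝ)+1)*π/k) * x 0 + Real.sin ((2*(n:ℝ)+1)*π/k) * x 1

lemma Lf_comb (k : ℕ) (n : ℤ) (a b : ℝ) (p q : EuclideanSpace ℝ (Fin 3)) :
    Lf k n (a • p + b • q) = a * Lf k n p + b * Lf k n q := by
  simp [Lf, PiLp.add_apply, PiLp.smul_apply, smul_eq_mul]; ring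

lemma Lf_wp (k : ℕ) (δ : ℝ) (n m : ℤ) :
    Lf k n (wp k δ m) = δ * Real.cos ((2*((m:ℝ) - (n:ℝ)) - 1)*π/k) := by
  have harg : (2*((m:ℝ) - (n:ℝ)) - 1)*π/k = 2*π*(m:ℝ)/k - (2*(n:ℝ)+1)*π/k := by ring
  rw [harg, Real.cos_sub]
  simp [Lf, wp]
  ring

lemma Lf_endpoints (k : ℕ) (δ : ℝ) (n : ℤ) :
    Lf k n (wp k δ n) = δ * Real.cos (π/k) ∧
    Lf k n (wp k δ (n+1)) = δ * Real.cos (π/k) := by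
  constructor
  · rw [Lf_wp]
    have e : (2*((n:ℝ) - (n:ℝ)) - 1)*π/k = -(π/k) := by ring
    rw [e, Real.cos_neg]
  · rw [Lf_wp]
    have e : (2*(((n+1:ℤ):ℝ) - (n:ℝ)) - 1)*π/k = π/k := by push_cast; ring
    rw [e]

lemma Lf_seg_eq (k : ℕ) (δ : ℝ) (n : ℤ) {x : EuclideanSpace ℝ (Fin 3)}
    (hx : x ∈ segment ℝ (wp k δ n) (wp k δ (n+1))) : Lf k n x = δ * Real.cos (π/k) := by
  obtain ⟨a, b, ha, hb, hab, rfl⟩ := hx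
  rw [Lf_comb, (Lf_endpoints k δ n).1, (Lf_endpoints k δ n).2, ← add_mul, hab, one_mul]

lemma Lf_lt (k : ℕ) (hk : 4 ≤ k) (δ : ℝ) (hδ : 0 < δ) (n m : ℤ)
    (h1 : ¬ m ≡ n [ZMOD k]) (h2 : ¬ m ≡ n+1 [ZMOD k]) :
    Lf k n (wp k δ m) < δ * Real.cos (π/k) := by
  have hk0 : (0:ℝ) < (k:ℝ) := by positivity
  have hkZ : (0:ℤ) < (k:ℤ) := by positivity
  rw [Lf_wp]
  set a := m - n with hadef
  set b := a % (k:ℤ) with hbdef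
  set q := a / (k:ℤ) with hqdef
  have hab : a = (k:ℤ) * q + b := (Int.mul_ediv_add_emod a k).symm
  have hb0 : 0 ≤ b := Int.emod_nonneg a (ne_of_gt hkZ)
  have hbk : b < (k:ℤ) := Int.emod_lt_of_pos a hkZ
  have hbne0 : b ≠ 0 := by
    intro h
    apply h1
    rw [Int.modEq_iff_dvd]
    refine ⟨-q, ?_⟩
    rw [mul_neg]
    omega
  have hbne1 : b ≠ 1 := by
    intro h
    apply h2
    rw [Int.modEq_iff_dvd]
    refine ⟨-q, ?_⟩
    rw [mul_neg]
    omega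
  have hb2 : 2 ≤ b := by omega
  have harg : (2*((m:ℝ) - (n:ℝ)) - 1)*π/k = (2*(b:ℝ)-1)*π/k + q*(2*π) := by
    have haR : (m:ℝ) - (n:ℝ) = (k:ℝ)*(q:ℝ) + (b:ℝ) := by exact_mod_cast congrArg (fun z : ℤ => (z:ℝ)) hab
    rw [haR]
    field_simp
    ring
  rw [harg, Real.cos_add_int_mul_two_pi]
  exact mul_lt_mul_of_pos_left (cos_lt k hk b hb2 hbk) hδ

lemma Lf_seg_lt (k : ℕ) (hk : 4 ≤ k) (δ : ℝ) (hδ : 0 < δ) (n m : ℤ)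
    (h1 : ¬ m ≡ n [ZMOD k]) (h2 : ¬ m ≡ n+1 [ZMOD k])
    (h3 : ¬ m+1 ≡ n [ZMOD k]) (h4 : ¬ m+1 ≡ n+1 [ZMOD k])
    {x : EuclideanSpace ℝ (Fin 3)}
    (hx : x ∈ segment ℝ (wp k δ m) (wp k δ (m+1))) : Lf k n x < δ * Real.cos (π/k) := by
  obtain ⟨a, b, ha, hb, hab, rfl⟩ := hx
  rw [Lf_comb]
  have L1 := Lf_lt k hk δ hδ n m h1 h2
  have L2 := Lf_lt k hk δ hδ n (m+1) h3 h4
  rcases eq_or_lt_of_le ha with he | ha'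
  · have hb1 : b = 1 := by linarith
    rw [← he, hb1]; simpa using L2
  · have hC : a*(δ * Real.cos (π/k)) + b*(δ * Real.cos (π/k)) = δ * Real.cos (π/k) := by
      rw [← add_mul, hab, one_mul]
    nlinarith [mul_lt_mul_of_pos_left L1 ha', mul_le_mul_of_nonneg_left L2.le hb]

lemma not_modEq_add_two (k : ℕ) (hk : 4 ≤ k) (n : ℤ) :
    ¬ (n+2) ≡ n [ZMOD k] ∧ ¬ (n+2) ≡ n+1 [ZMOD k] := by
  constructor
  · intro h
    obtain ⟨q, hq⟩ := Int.ModEq.dvd h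
    have hkZ : (4:ℤ) ≤ (k:ℤ) := by exact_mod_cast hk
    have h2 : (k:ℤ) * q = -2 := by linarith
    rcases le_or_gt q (-1) with h | h
    · nlinarith
    · have : 0 ≤ q := by omega
      nlinarith
  · intro h
    obtain ⟨q, hq⟩ := Int.ModEq.dvd h
    have hkZ : (4:ℤ) ≤ (k:ℤ) := by exact_mod_cast hk
    have h2 : (k:ℤ) * q = -1 := by linarith
    rcases le_or_gt q (-1) with h | h
    · nlinarith
    · have : 0 ≤ q := by omega
      nlinarith

lemma seg_adjacent (k : ℕ) (hk : 4 ≤ k) (δ : ℝ) (hδ : 0 < δ) (n : ℤ) :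
    segment ℝ (wp k δ n) (wp k δ (n+1)) ∩ segment ℝ (wp k δ (n+1)) (wp k δ (n+2)) =
      {wp k δ (n+1)} := by
  ext x
  constructor
  · rintro ⟨hx1, hx2⟩
    have hC : Lf k n x = δ * Real.cos (π/k) := Lf_seg_eq k δ n hx1
    obtain ⟨a, b, ha, hb, hab, hx⟩ := hx2
    obtain ⟨hm1, hm2⟩ := not_modEq_add_two k hk n
    have L2 : Lf k n (wp k δ (n+2)) < δ * Real.cos (π/k) := Lf_lt k hk δ hδ n (n+2) hm1 hm2
    have hcomb : Lf k n x = a * (δ * Real.cos (π/k)) + b * Lf k n (wp k δ (n+2)) := by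
      rw [← hx, Lf_comb, (Lf_endpoints k δ n).2]
    have habC : a*(δ * Real.cos (π/k)) + b*(δ * Real.cos (π/k)) = δ * Real.cos (π/k) := by
      rw [← add_mul, hab, one_mul]
    have hb0 : b = 0 := by
      by_contra hbne
      have hbpos : 0 < b := lt_of_le_of_ne hb (Ne.symm hbne)
      have hblt := mul_lt_mul_of_pos_left L2 hbpos
      linarith
    have ha1 : a = 1 := by linarith
    rw [← hx, hb0, ha1]
    simp
  · rintro rfl
    exact ⟨right_mem_segment ℝ _ _, left_mem_segment ℝ _ _⟩

lemma seg_disjoint (k : ℕ) (hk : 4 ≤ k) (δ : ℝ) (hδ : 0 < δ) (n m : ℤ)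
    (h1 : ¬ m ≡ n [ZMOD k]) (h2 : ¬ m ≡ n+1 [ZMOD k]) (h3 : ¬ m+1 ≡ n [ZMOD k]) :
    Disjoint (segment ℝ (wp k δ n) (wp k δ (n+1))) (segment ℝ (wp k δ m) (wp k δ (m+1))) := by
  rw [Set.disjoint_left]
  intro x hx1 hx2
  have h4 : ¬ m+1 ≡ n+1 [ZMOD k] := by
    intro h
    exact h1 (by simpa using Int.ModEq.sub h (Int.ModEq.refl 1))
  have hC : Lf k n x = δ * Real.cos (π/k) := Lf_seg_eq k δ n hx1
  have hL : Lf k n x < δ * Real.cos (π/k) := Lf_seg_lt k hk δ hδ n m h1 h2 h3 h4 hx2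
  linarith

lemma angle_bound (k : ℕ) (δ η : ℝ) (hδ0 : 0 < δ) (hη0 : 0 < η) (hη1 : η ≤ 1)
    (hkey : 8*δ^2*(1 + Real.cos η) ≤ 1 - Real.cos η) (n : ℤ) :
    π - η ≤ angle (wp k δ (n+1) - wp k δ n) (wp k δ (n+2) - wp k δ (n+1)) := by
  have hπ3 := Real.pi_gt_three
  set x := wp k δ (n+1) - wp k δ n with hxdef
  set y := wp k δ (n+2) - wp k δ (n+1) with hydef
  have hcossq : ∀ s t : ℝ, (δ*(Real.cos s - Real.cos t))^2 ≤ 4*δ^2 := by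
    intro s t
    have h1 := Real.cos_le_one s
    have h2 := Real.neg_one_le_cos s
    have h3 := Real.cos_le_one t
    have h4 := Real.neg_one_le_cos t
    have hd : (Real.cos s - Real.cos t)^2 ≤ 4 := by nlinarith
    nlinarith [mul_le_mul_of_nonneg_left hd (sq_nonneg δ)]
  have hsinsq : ∀ s t : ℝ, (δ*(Real.sin s - Real.sin t))^2 ≤ 4*δ^2 := by
    intro s t
    have h1 := Real.sin_le_one s
    have h2 := Real.neg_one_le_sin s
    have h3 := Real.sin_le_one t
    have h4 := Real.neg_one_le_sin t
    have hd : (Real.sin s - Real.sin t)^2 ≤ 4 := by nlinarith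
    nlinarith [mul_le_mul_of_nonneg_left hd (sq_nonneg δ)]
  have hx0 : (x 0)^2 ≤ 4*δ^2 := by
    have e : x 0 = δ * Real.cos (2*π*((n+1:ℤ):ℝ)/k) - δ * Real.cos (2*π*(n:ℝ)/k) := by
      simp [hxdef, wp0]
    rw [e, ← mul_sub]
    exact hcossq _ _
  have hx1 : (x 1)^2 ≤ 4*δ^2 := by
    have e : x 1 = δ * Real.sin (2*π*((n+1:ℤ):ℝ)/k) - δ * Real.sin (2*π*(n:ℝ)/k) := by
      simp [hxdef, wp1]
    rw [e, ← mul_sub]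
    exact hsinsq _ _
  have hy0 : (y 0)^2 ≤ 4*δ^2 := by
    have e : y 0 = δ * Real.cos (2*π*((n+2:ℤ):ℝ)/k) - δ * Real.cos (2*π*((n+1:ℤ):ℝ)/k) := by
      simp [hydef, wp0]
    rw [e, ← mul_sub]
    exact hcossq _ _
  have hy1 : (y 1)^2 ≤ 4*δ^2 := by
    have e : y 1 = δ * Real.sin (2*π*((n+2:ℤ):ℝ)/k) - δ * Real.sin (2*π*((n+1:ℤ):ℝ)/k) := by
      simp [hydef, wp1]
    rw [e, ← mul_sub]
    exact hsinsq _ _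
  have hpar : (x 2 = 1 ∧ y 2 = -1) ∨ (x 2 = -1 ∧ y 2 = 1) := by
    have ex : x 2 = (if Even (n+1) then (0:ℝ) else 1) - (if Even n then 0 else 1) := by
      simp [hxdef, wp2]
    have ey : y 2 = (if Even (n+2) then (0:ℝ) else 1) - (if Even (n+1) then 0 else 1) := by
      simp [hydef, wp2]
    have h22 : (n+2 : ℤ) = (n+1)+1 := by ring
    rcases Int.even_or_odd n with he | ho
    · left
      rw [ex, ey, h22]
      simp [Int.even_add_one, he]
    · right
      rw [ex, ey, h22]
      simp [Int.even_add_one, Int.not_even_iff_odd.2 ho]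
  have hz : x 2 * y 2 = -1 ∧ (x 2)^2 = 1 ∧ (y 2)^2 = 1 := by
    rcases hpar with ⟨h1, h2⟩ | ⟨h1, h2⟩ <;> rw [h1, h2] <;> norm_num
  obtain ⟨hz1, hz2, hz3⟩ := hz
  have hnum : ⟪x, y⟫ ≤ 8*δ^2 - 1 := by
    rw [inner3]
    nlinarith [sq_nonneg (x 0 - y 0), sq_nonneg (x 1 - y 1)]
  have hxnorm : ‖x‖^2 ≤ 8*δ^2 + 1 := by rw [normsq3]; linarith
  have hynorm : ‖y‖^2 ≤ 8*δ^2 + 1 := by rw [normsq3]; linarith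
  have hxnorm1 : 1 ≤ ‖x‖^2 := by rw [normsq3]; nlinarith [sq_nonneg (x 0), sq_nonneg (x 1)]
  have hynorm1 : 1 ≤ ‖y‖^2 := by rw [normsq3]; nlinarith [sq_nonneg (y 0), sq_nonneg (y 1)]
  have hx1le : 1 ≤ ‖x‖ := by nlinarith [norm_nonneg x]
  have hy1le : 1 ≤ ‖y‖ := by nlinarith [norm_nonneg y]
  have hden1 : 1 ≤ ‖x‖ * ‖y‖ := by nlinarith
  have hden2 : ‖x‖ * ‖y‖ ≤ 8*δ^2 + 1 := by nlinarith [sq_nonneg (‖x‖ - ‖y‖)]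
  have hc0 : 0 < Real.cos η :=
    Real.cos_pos_of_mem_Ioo ⟨by linarith, by linarith⟩
  have hnumden : ⟪x, y⟫ ≤ -Real.cos η * (‖x‖ * ‖y‖) := by
    have step1 : Real.cos η * (‖x‖ * ‖y‖) ≤ Real.cos η * (8*δ^2+1) :=
      mul_le_mul_of_nonneg_left hden2 hc0.le
    nlinarith
  have hr : ⟪x, y⟫ / (‖x‖ * ‖y‖) ≤ -Real.cos η := by
    rw [div_le_iff₀ (by linarith : (0:ℝ) < ‖x‖ * ‖y‖)]
    linarith [hnumden]
  have hangle : angle x y = Real.arccos (⟪x, y⟫ / (‖x‖ * ‖y‖)) := rfl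
  have h1 : Real.arccos (-(Real.cos η)) ≤ Real.arccos (⟪x, y⟫ / (‖x‖ * ‖y‖)) := by
    rw [Real.arccos_eq_pi_div_two_sub_arcsin, Real.arccos_eq_pi_div_two_sub_arcsin]
    linarith [Real.monotone_arcsin hr]
  have h2 : Real.arccos (-(Real.cos η)) = π - η := by
    rw [Real.arccos_neg, Real.arccos_cos hη0.le (by linarith)]
  rw [hangle]
  linarith

/-- Sharpness of the bound `kπ` for even `k`: for every even `k ≥ 4` and every
`ε > 0` there is a piecewise geodesic Jordan curve with `k` vertices in `ℝ³` of
total curvature greater than `kπ - ε`. -/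
theorem total_curvature_gamma_even_sharp (k : ℕ) (hk : 4 ≤ k) (hkeven : Even k)
    (ε : ℝ) (hε : 0 < ε) :
    ∃ v : ZMod k → EuclideanSpace ℝ (Fin 3),
      IsSimpleClosedPolygon v ∧
      k * Real.pi - ε <
        ∑ i ∈ Finset.range k,
          angle (v ((i : ZMod k) + 1) - v (i : ZMod k))
            (v ((i : ZMod k) + 2) - v ((i : ZMod k) + 1)) := by
  haveI : NeZero k := ⟨by omega⟩
  have hk0 : k ≠ 0 := by omega
  have hπ3 := Real.pi_gt_three
  set η := min (ε/(2*k)) 1 with hηdef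
  have hη0 : 0 < η := lt_min (by positivity) one_pos
  have hη1 : η ≤ 1 := min_le_right _ _
  have hc1 : Real.cos η < 1 := by
    have := Real.cos_lt_cos_of_nonneg_of_le_pi (le_refl 0) (by linarith) hη0
    rwa [Real.cos_zero] at this
  have hc0 : 0 < Real.cos η := Real.cos_pos_of_mem_Ioo ⟨by linarith, by linarith⟩
  set δ := Real.sqrt ((1 - Real.cos η)/32) with hδdef
  have h32 : 0 < (1 - Real.cos η)/32 := by
    apply div_pos (by linarith) (by norm_num)
  have hδ0 : 0 < δ := Real.sqrt_pos.2 h32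
  have hδsq : δ^2 = (1 - Real.cos η)/32 := Real.sq_sqrt h32.le
  have hkey : 8*δ^2*(1 + Real.cos η) ≤ 1 - Real.cos η := by
    rw [hδsq]; nlinarith
  set v : ZMod k → EuclideanSpace ℝ (Fin 3) := fun i => wp k δ ((i.val : ℤ)) with hvdef
  have hsurj : ∀ i : ZMod k, ((i.val : ℤ) : ZMod k) = i := by
    intro i; push_cast; exact ZMod.natCast_rightInverse i
  have hv : ∀ m : ℤ, v ((m : ZMod k)) = wp k δ m := by
    intro m
    apply wp_congr k hk0 hkeven
    rw [← ZMod.intCast_eq_intCast_iff]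
    push_cast
    exact ZMod.natCast_rightInverse _
  have E : ∀ i : ZMod k, v i = wp k δ (i.val:ℤ) ∧ v (i+1) = wp k δ ((i.val:ℤ)+1) ∧
      v (i+2) = wp k δ ((i.val:ℤ)+2) := by
    intro i
    refine ⟨?_, ?_, ?_⟩
    · rfl
    · have := hv ((i.val:ℤ)+1); rwa [Int.cast_add, Int.cast_one, hsurj] at this
    · have := hv ((i.val:ℤ)+2); rwa [Int.cast_add, Int.cast_two, hsurj] at this
  refine ⟨v, ⟨?_, ?_, ?_⟩, ?_⟩
  · intro i
    rw [(E i).1, (E i).2.1]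
    exact wp_ne k δ _
  · intro i
    rw [(E i).1, (E i).2.1, (E i).2.2]
    exact seg_adjacent k hk δ hδ0 _
  · intro i j hij h1 h2
    rw [(E i).1, (E i).2.1, (E j).1, (E j).2.1]
    apply seg_disjoint k hk δ hδ0
    · intro h
      apply hij
      have := (ZMod.intCast_eq_intCast_iff _ _ _).2 h
      rw [hsurj, hsurj] at this
      exact this.symm
    · intro h
      apply h1
      have := (ZMod.intCast_eq_intCast_iff _ _ _).2 h
      rw [Int.cast_add, Int.cast_one, hsurj, hsurj] at this
      exact this.symm
    · intro h
      apply h2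
      have := (ZMod.intCast_eq_intCast_iff _ _ _).2 h
      rw [Int.cast_add, Int.cast_one, hsurj, hsurj] at this
      exact this.symm
  · have hterm : ∀ i ∈ Finset.range k, π - η ≤
        angle (v ((i : ZMod k) + 1) - v (i : ZMod k))
          (v ((i : ZMod k) + 2) - v ((i : ZMod k) + 1)) := by
      intro i _
      have c0 := hv (i:ℤ)
      rw [Int.cast_natCast] at c0
      have c1 := hv ((i:ℤ)+1)
      have c2 := hv ((i:ℤ)+2)
      push_cast at c1 c2
      rw [c0, c1, c2]
      exact angle_bound k δ η hδ0 hη0 hη1 hkey (i:ℤ)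
    have hsum := Finset.sum_le_sum hterm
    rw [Finset.sum_const, Finset.card_range, nsmul_eq_mul] at hsum
    have hkη : (k:ℝ)*η < ε := by
      have h1 : η ≤ ε/(2*k) := min_le_left _ _
      have hkpos : (0:ℝ) < k := by positivity
      have := mul_le_mul_of_nonneg_left h1 hkpos.le
      have he : (k:ℝ) * (ε/(2*k)) = ε/2 := by field_simp
      rw [he] at this
      linarith
    have : (k:ℝ) * (π - η) = k*π - k*η := by ring
    linarith
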